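/- Let C₂ = [[a,c],[c,b]] be a 2×2 real symmetric positive-definite matrix with a ≥ b, and take s = 1. Then with γ̂ := (a²−c²)/(ab−c²)², the vector x̂ = (1,0)ᵀ is an optimal solution of the scaled linx problem with γ = γ̂, and consequently γ̂ is an optimal scaling parameter: linx(C₂,1;γ̂) ≤ linx(C₂,1;γ) for every γ > 0. -/

import Mathlib

open Matrix Real Set

noncomputable section

/-- The feasible polytope `P(n,s)`. -/
def PP (n s : ℕ) : Set (Fin n → ℝ) :=
  {x | (∑ i, x i) = (s : ℝ) ∧ ∀ i, 0 ≤ x i ∧ x i ≤ 1}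

/-- The scaled linx objective `f(C,s;γ;x)`. -/
def fLinxScaled {n : ℕ} (C : Matrix (Fin n) (Fin n) ℝ) (s : ℕ) (γ : ℝ) (x : Fin n → ℝ) : ℝ :=
  (1 / 2) * (Real.log ((γ • (C * Matrix.diagonal x * C) + Matrix.diagonal fun i => 1 - x i).det)
    - (s : ℝ) * Real.log γ)

/-- The scaled linx bound `linx(C,s;γ)`. -/
def linxScaled (n s : ℕ) (C : Matrix (Fin n) (Fin n) ℝ) (γ : ℝ) : ℝ :=
  sSup (fLinxScaled C s γ '' PP n s)

lemma detFormula (a b c γ : ℝ) (x : Fin 2 → ℝ) :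
    (γ • ((!![a,c;c,b] : Matrix (Fin 2) (Fin 2) ℝ) * Matrix.diagonal x * !![a,c;c,b])
      + Matrix.diagonal fun i => 1 - x i).det
    = γ^2*(a*b-c^2)^2*(x 0)*(x 1)
      + γ*((a^2*x 0+c^2*x 1)*(1-x 1) + (c^2*x 0+b^2*x 1)*(1-x 0))
      + (1-x 0)*(1-x 1) := by
  rw [Matrix.det_fin_two]
  simp [Matrix.mul_apply, Matrix.vecMul, dotProduct, Fin.sum_univ_two, Matrix.diagonal_apply]
  ring

lemma onePP : (![1, 0] : Fin 2 → ℝ) ∈ PP 2 1 := by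
  constructor
  · simp [Fin.sum_univ_two]
  · intro i
    fin_cases i <;> norm_num

set_option maxHeartbeats 1000000 in
theorem stmt_12 (a b c : ℝ) (hab : b ≤ a)
    (hC : (!![a, c; c, b] : Matrix (Fin 2) (Fin 2) ℝ).PosDef)
    (γ0 : ℝ) (hγ0 : γ0 = (a ^ 2 - c ^ 2) / (a * b - c ^ 2) ^ 2) :
    (∀ x ∈ PP 2 1,
      fLinxScaled !![a, c; c, b] 1 γ0 x ≤ fLinxScaled !![a, c; c, b] 1 γ0 ![1, 0]) ∧
    (∀ γ : ℝ, 0 < γ →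
      linxScaled 2 1 !![a, c; c, b] γ0 ≤ linxScaled 2 1 !![a, c; c, b] γ) := by
  -- basic positivity facts
  have ha : 0 < a := by
    have h := hC.dotProduct_mulVec_pos (x := ![1, 0]) (by
      intro h; have := congrFun h 0; simp at this)
    simpa [Matrix.mulVec, dotProduct, Fin.sum_univ_two] using h
  have hd : 0 < a * b - c ^ 2 := by
    have := hC.det_pos
    rw [Matrix.det_fin_two_of] at this
    nlinarith
  have hb : 0 < b := by nlinarith [sq_nonneg c]
  have hac : c ^ 2 < a ^ 2 := by nlinarith
  have hγ0pos : 0 < γ0 := by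
    rw [hγ0]; exact div_pos (by nlinarith) (pow_pos hd 2)
  have hγK : γ0 * (a * b - c ^ 2) ^ 2 = a ^ 2 - c ^ 2 := by
    rw [hγ0]; field_simp
  have hγE : 1 ≤ γ0 * (a ^ 2 - c ^ 2) := by
    have h1 : (a * b - c ^ 2) ^ 2 ≤ (a ^ 2 - c ^ 2) ^ 2 := by
      nlinarith [mul_nonneg (mul_nonneg ha.le (sub_nonneg.2 hab)) (by nlinarith : (0:ℝ) ≤ a ^ 2 + a * b - 2 * c ^ 2)]
    rw [hγ0]
    rw [div_mul_eq_mul_div, le_div_iff₀ (by positivity)]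
    nlinarith
  -- value of det at x̂ = ![1,0]
  have hdet1 : ∀ γ : ℝ,
      ((γ • ((!![a,c;c,b] : Matrix (Fin 2) (Fin 2) ℝ) * Matrix.diagonal ![1,0] * !![a,c;c,b])
        + Matrix.diagonal fun i => 1 - (![1,0] : Fin 2 → ℝ) i).det) = γ * a ^ 2 := by
    intro γ
    rw [detFormula]
    norm_num
  -- positivity of det on PP
  have hDpos : ∀ γ : ℝ, 0 < γ → ∀ x ∈ PP 2 1,
      0 < (γ • ((!![a,c;c,b] : Matrix (Fin 2) (Fin 2) ℝ) * Matrix.diagonal x * !![a,c;c,b])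
        + Matrix.diagonal fun i => 1 - x i).det := by
    intro γ hγ x hx
    obtain ⟨hsum, hbd⟩ := hx
    rw [Fin.sum_univ_two] at hsum
    norm_num at hsum
    obtain ⟨h00, h01⟩ := hbd 0
    obtain ⟨h10, h11⟩ := hbd 1
    have h1 : x 1 = 1 - x 0 := by linarith
    rw [detFormula, h1]
    set t := x 0 with ht
    have hclean : γ^2*(a*b-c^2)^2*t*(1-t)
        + γ*((a^2*t+c^2*(1-t))*(1-(1-t)) + (c^2*t+b^2*(1-t))*(1-t))
        + (1-t)*(1-(1-t))
        = γ^2*(a*b-c^2)^2*(t*(1-t)) + γ*(a^2*t^2 + 2*c^2*(t*(1-t)) + b^2*(1-t)^2)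
          + t*(1-t) := by ring
    rw [hclean]
    have h2 : (1:ℝ)/2 ≤ t^2 + (1-t)^2 := by nlinarith [sq_nonneg (t - (1-t))]
    have hq : b^2/2 ≤ a^2*t^2 + b^2*(1-t)^2 := by
      nlinarith [mul_nonneg (by nlinarith : (0:ℝ) ≤ a^2 - b^2) (sq_nonneg t),
        mul_le_mul_of_nonneg_left h2 (sq_nonneg b)]
    have htt : 0 ≤ t*(1-t) := mul_nonneg h00 (by linarith)
    nlinarith [mul_nonneg (mul_nonneg (sq_nonneg γ) (sq_nonneg (a*b-c^2))) htt,
      mul_nonneg (mul_nonneg hγ.le (by positivity : (0:ℝ) ≤ 2*c^2)) htt,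
      mul_pos hγ (lt_of_lt_of_le (by positivity) hq)]
  -- the main inequality: det ≤ γ0 * a^2 on PP
  have hDle : ∀ x ∈ PP 2 1,
      (γ0 • ((!![a,c;c,b] : Matrix (Fin 2) (Fin 2) ℝ) * Matrix.diagonal x * !![a,c;c,b])
        + Matrix.diagonal fun i => 1 - x i).det ≤ γ0 * a ^ 2 := by
    intro x hx
    obtain ⟨hsum, hbd⟩ := hx
    rw [Fin.sum_univ_two] at hsum
    norm_num at hsum
    obtain ⟨h00, h01⟩ := hbd 0
    obtain ⟨h10, h11⟩ := hbd 1
    have h1 : x 1 = 1 - x 0 := by linarith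
    rw [detFormula, h1]
    set t := x 0 with ht
    have hiden : γ0 * a^2 - (γ0^2*(a*b-c^2)^2*t*(1-t)
        + γ0*((a^2*t+c^2*(1-t))*(1-(1-t)) + (c^2*t+b^2*(1-t))*(1-t))
        + (1-t)*(1-(1-t)))
        = (t*(1-t))*(γ0*(a^2-c^2) - 1) + (γ0*(a^2-b^2))*(1-t)^2 := by
      linear_combination (-(γ0*t*(1-t))) * hγK
    have htt : 0 ≤ t*(1-t) := mul_nonneg h00 (by linarith)
    nlinarith [hiden, mul_nonneg htt (sub_nonneg.2 hγE),
      mul_nonneg (mul_nonneg hγ0pos.le (by nlinarith : (0:ℝ) ≤ a^2 - b^2)) (sq_nonneg (1-t))]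
  -- part 1
  have part1 : ∀ x ∈ PP 2 1,
      fLinxScaled !![a, c; c, b] 1 γ0 x ≤ fLinxScaled !![a, c; c, b] 1 γ0 ![1, 0] := by
    intro x hx
    have hD := hDpos γ0 hγ0pos x hx
    have hle := hDle x hx
    have hlog := Real.log_le_log hD hle
    simp only [fLinxScaled, hdet1 γ0]
    push_cast
    linarith
  refine ⟨part1, ?_⟩
  -- part 2
  intro γ hγ
  have hval : ∀ γ' : ℝ, 0 < γ' →
      fLinxScaled !![a, c; c, b] 1 γ' ![1, 0] = Real.log (a ^ 2) / 2 := by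
    intro γ' hγ'
    simp only [fLinxScaled, hdet1 γ']
    rw [Real.log_mul (ne_of_gt hγ') (by positivity)]
    push_cast
    ring
  have hub : linxScaled 2 1 !![a, c; c, b] γ0 ≤ Real.log (a ^ 2) / 2 := by
    rw [← hval γ0 hγ0pos]
    apply csSup_le ⟨_, mem_image_of_mem _ onePP⟩
    rintro y ⟨x, hx, rfl⟩
    exact part1 x hx
  have hbdd : BddAbove (fLinxScaled !![a, c; c, b] 1 γ '' PP 2 1) := by
    refine ⟨(1/2) * (Real.log (γ^2*(a*b-c^2)^2 + γ*(a^2+2*c^2+b^2) + 1) - Real.log γ), ?_⟩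
    rintro y ⟨x, hx, rfl⟩
    have hD := hDpos γ hγ x hx
    have hB : (γ • ((!![a,c;c,b] : Matrix (Fin 2) (Fin 2) ℝ) * Matrix.diagonal x * !![a,c;c,b])
        + Matrix.diagonal fun i => 1 - x i).det
        ≤ γ^2*(a*b-c^2)^2 + γ*(a^2+2*c^2+b^2) + 1 := by
      obtain ⟨hsum, hbd⟩ := hx
      rw [Fin.sum_univ_two] at hsum
      norm_num at hsum
      obtain ⟨h00, h01⟩ := hbd 0
      obtain ⟨h10, h11⟩ := hbd 1
      have h1 : x 1 = 1 - x 0 := by linarith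
      rw [detFormula, h1]
      set t := x 0 with ht
      have ht2 : t^2 ≤ 1 := by nlinarith
      have htle1 : t*(1-t) ≤ 1 := by nlinarith
      have e1 : γ^2*(a*b-c^2)^2*t*(1-t) ≤ γ^2*(a*b-c^2)^2 := by
        nlinarith [mul_le_mul_of_nonneg_left htle1
          (mul_nonneg (sq_nonneg γ) (sq_nonneg (a*b-c^2)))]
      have e2 : (a^2*t+c^2*(1-t))*(1-(1-t)) + (c^2*t+b^2*(1-t))*(1-t)
          ≤ a^2+2*c^2+b^2 := by
        nlinarith [mul_nonneg (sq_nonneg a) (by nlinarith : (0:ℝ) ≤ 1 - t^2),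
          mul_nonneg (sq_nonneg b) (by nlinarith : (0:ℝ) ≤ 1 - (1-t)^2),
          mul_nonneg (sq_nonneg c) (by nlinarith : (0:ℝ) ≤ 1 - t*(1-t)),
          sq_nonneg c, sq_nonneg a, sq_nonneg b]
      have e3 : (1-t)*(1-(1-t)) ≤ 1 := by nlinarith
      have e2' := mul_le_mul_of_nonneg_left e2 hγ.le
      linarith
    have hlog := Real.log_le_log hD hB
    simp only [fLinxScaled]
    push_cast
    linarith
  calc linxScaled 2 1 !![a, c; c, b] γ0 ≤ Real.log (a ^ 2) / 2 := hub
    _ = fLinxScaled !![a, c; c, b] 1 γ ![1, 0] := (hval γ hγ).symm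
    _ ≤ linxScaled 2 1 !![a, c; c, b] γ := le_csSup hbdd (mem_image_of_mem _ onePP)
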